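/- arXiv:1408.1175 — 2 statements merged into one kernel-verified Lean document; each statement's English description precedes it below -/
import Mathlib

section
/- Let π: 𝒢 → M be a locally trivial bundle of locally compact groups with fiber G, and let λ be a fixed (left) Haar measure on G. For every continuous compactly supported function f: 𝒢 → ℂ, the function m ↦ ∫_{𝒢ₘ} f(x) dλ(x) (where the integral over the fiber is computed via the identification 𝒢ₘ ≅ G) is continuous on M and vanishes outside the compact set π(supp f); in particular it lies in C₀(M). -/
/-- A locally trivial bundle of locally compact groups with fiber group `G`:
`π : 𝒢 → M` is a continuous open surjection, each fiber `π⁻¹(m)` is identified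
with `G` via `φ m`, and locally `π⁻¹(U)` is homeomorphic to `U × G` compatibly
with `π` and the fiber identifications. -/
structure GroupBundle (𝒢 M G : Type*) [TopologicalSpace 𝒢] [TopologicalSpace M]
    [TopologicalSpace G] [Group G] [IsTopologicalGroup G] where
  π : 𝒢 → M
  continuous_π : Continuous π
  isOpenMap_π : IsOpenMap π
  surjective_π : Function.Surjective π
  φ : (m : M) → {x : 𝒢 // π x = m} ≃ G
  locTriv : ∀ m : M, ∃ U : Set M, IsOpen U ∧ m ∈ U ∧
    ∃ h : (π ⁻¹' U) ≃ₜ (U × G),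
      ∀ x : π ⁻¹' U, ((h x).1 : M) = π x.1 ∧ (h x).2 = φ (π x.1) ⟨x.1, rfl⟩

namespace GroupBundle

variable {𝒢 M G : Type*} [TopologicalSpace 𝒢] [TopologicalSpace M]
  [TopologicalSpace G] [Group G] [IsTopologicalGroup G]

/-- The element of the fiber over `m` with `G`-coordinate `g`. -/
def elt (B : GroupBundle 𝒢 M G) (m : M) (g : G) : 𝒢 := ((B.φ m).symm g).1

lemma π_elt (B : GroupBundle 𝒢 M G) (m : M) (g : G) : B.π (B.elt m g) = m :=
  ((B.φ m).symm g).2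

/-- The `G`-coordinate of a point of `𝒢`. -/
def coord (B : GroupBundle 𝒢 M G) (x : 𝒢) : G := B.φ (B.π x) ⟨x, rfl⟩

/-- The set of composable pairs `𝒢⁽²⁾ = {(x,y) : π x = π y}`. -/
def comp2 (B : GroupBundle 𝒢 M G) : Set (𝒢 × 𝒢) := {p | B.π p.1 = B.π p.2}

/-- Fiberwise multiplication, defined via the identifications of the fibers with `G`. -/
noncomputable def mul (B : GroupBundle 𝒢 M G) (p : B.comp2) : 𝒢 :=
  B.elt (B.π p.1.1) (B.coord p.1.1 * B.coord p.1.2)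

/-- Fiberwise inversion, defined via the identifications of the fibers with `G`. -/
noncomputable def inv (B : GroupBundle 𝒢 M G) (x : 𝒢) : 𝒢 :=
  B.elt (B.π x) (B.coord x)⁻¹

end GroupBundle


namespace GroupBundle

variable {𝒢 M G : Type*} [TopologicalSpace 𝒢] [TopologicalSpace M]
  [TopologicalSpace G] [Group G] [IsTopologicalGroup G]

lemma coord_eq_of (B : GroupBundle 𝒢 M G) {x : 𝒢} {m : M} (h : B.π x = m) :
    B.coord x = B.φ m ⟨x, h⟩ := by subst h; rfl

lemma coord_elt (B : GroupBundle 𝒢 M G) (m : M) (g : G) : B.coord (B.elt m g) = g := by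
  rw [B.coord_eq_of (B.π_elt m g)]
  exact (B.φ m).apply_symm_apply g

lemma elt_coord (B : GroupBundle 𝒢 M G) (y : 𝒢) : B.elt (B.π y) (B.coord y) = y := by
  simp [elt, coord]

lemma symm_eq_elt (B : GroupBundle 𝒢 M G) {U : Set M}
    (h : (B.π ⁻¹' U) ≃ₜ (U × G))
    (hh : ∀ x : B.π ⁻¹' U, ((h x).1 : M) = B.π x.1 ∧ (h x).2 = B.φ (B.π x.1) ⟨x.1, rfl⟩)
    {m : M} (hm : m ∈ U) (g : G) :
    ((h.symm (⟨m, hm⟩, g)).1 : 𝒢) = B.elt m g := by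
  set x := h.symm (⟨m, hm⟩, g) with hxdef
  have hx : h x = (⟨m, hm⟩, g) := h.apply_symm_apply _
  have h1 : B.π x.1 = m := by rw [← (hh x).1, hx]
  have h2 : B.coord x.1 = g := by
    have h3 := (hh x).2
    rw [hx] at h3
    exact h3.symm
  calc (x.1 : 𝒢) = B.elt (B.π x.1) (B.coord x.1) := (B.elt_coord x.1).symm
    _ = B.elt m g := by rw [h1, h2]

end GroupBundle


open MeasureTheory
open scoped ZeroAtInfty

/-- for a locally trivial bundle of locally compact groups with Haar
measure `μ` on the fiber group `G`, and `f : 𝒢 → ℂ` continuous with compact support,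
the fiber-integral function `m ↦ ∫_{𝒢ₘ} f dλ` is continuous, vanishes outside the
compact set `π(supp f)`, and is given by an element of `C₀(M, ℂ)`. -/
theorem statement1 {𝒢 M G : Type*} [TopologicalSpace 𝒢] [TopologicalSpace M]
    [TopologicalSpace G] [Group G] [IsTopologicalGroup G]
    [LocallyCompactSpace 𝒢] [T2Space 𝒢] [LocallyCompactSpace M] [T2Space M]
    [LocallyCompactSpace G] [T2Space G]
    [MeasurableSpace G] [BorelSpace G]
    (B : GroupBundle 𝒢 M G) (μ : Measure G) [μ.IsHaarMeasure]
    (f : 𝒢 → ℂ) (hf : Continuous f) (hsupp : HasCompactSupport f) :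
    (Continuous fun m : M => ∫ g : G, f (B.elt m g) ∂μ) ∧
    IsCompact (B.π '' tsupport f) ∧
    (∀ m : M, m ∉ B.π '' tsupport f → ∫ g : G, f (B.elt m g) ∂μ = 0) ∧
    ∃ F : C₀(M, ℂ), ∀ m : M, F m = ∫ g : G, f (B.elt m g) ∂μ := by
  have hcomp : IsCompact (B.π '' tsupport f) := IsCompact.image hsupp B.continuous_π
  have hzero : ∀ m : M, m ∉ B.π '' tsupport f → ∫ g : G, f (B.elt m g) ∂μ = 0 := by
    intro m hm
    have hz : ∀ g : G, f (B.elt m g) = 0 := by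
      intro g
      by_contra hne
      exact hm ⟨B.elt m g, subset_tsupport f hne, B.π_elt m g⟩
    simp [hz]
  have hcont : Continuous fun m : M => ∫ g : G, f (B.elt m g) ∂μ := by
    rw [continuous_iff_continuousAt]
    intro m₀
    obtain ⟨U, hUopen, hm₀U, h, hh⟩ := B.locTriv m₀
    obtain ⟨K, hKcomp, hm₀K, hKU⟩ := exists_compact_subset hUopen hm₀U
    set Φ : U × G → ℂ := fun p => f ((h.symm p).1) with hΦdef
    have hΦcont : Continuous Φ := hf.comp (continuous_subtype_val.comp h.symm.continuous)
    obtain ⟨C, hC⟩ := hf.bounded_above_of_compact_support hsupp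
    set T : Set 𝒢 := tsupport f ∩ B.π ⁻¹' K with hTdef
    have hTcomp : IsCompact T :=
      IsCompact.inter_right hsupp (hKcomp.isClosed.preimage B.continuous_π)
    have hTU : T ⊆ B.π ⁻¹' U := fun x hx => hKU hx.2
    have hcoordOn : ContinuousOn B.coord (B.π ⁻¹' U) := by
      rw [continuousOn_iff_continuous_restrict]
      have hr : Set.domRestrict (B.π ⁻¹' U) B.coord = fun x => (h x).2 := by
        funext x
        exact ((hh x).2).symm
      rw [hr]
      exact continuous_snd.comp h.continuous
    set L : Set G := B.coord '' T with hLdef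
    have hLcomp : IsCompact L := hTcomp.image_of_continuousOn (hcoordOn.mono hTU)
    have key : ∀ m ∈ K, ∀ g : G, g ∉ L → f (B.elt m g) = 0 := by
      intro m hm g hg
      by_contra hne
      apply hg
      have hT : B.elt m g ∈ T :=
        ⟨subset_tsupport f hne, by rw [Set.mem_preimage, B.π_elt]; exact hm⟩
      exact ⟨B.elt m g, hT, B.coord_elt m g⟩
    have huncurry : ContinuousOn (Function.uncurry fun (m : M) (g : G) => f (B.elt m g))
        (U ×ˢ (Set.univ : Set G)) := by
      rw [continuousOn_iff_continuous_restrict]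
      have hr : Set.domRestrict (U ×ˢ (Set.univ : Set G))
          (Function.uncurry fun (m : M) (g : G) => f (B.elt m g)) =
          fun p : ↥(U ×ˢ (Set.univ : Set G)) => Φ (⟨(p : M × G).1, p.2.1⟩, (p : M × G).2) := by
        funext p
        exact congrArg f (B.symm_eq_elt h hh p.2.1 (p : M × G).2).symm
      rw [hr]
      exact hΦcont.comp (((continuous_fst.comp continuous_subtype_val).subtype_mk _).prodMk
        (continuous_snd.comp continuous_subtype_val))
    have hco : ContinuousOn (fun m : M => ∫ g : G, f (B.elt m g) ∂μ) (interior K) := by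
      have := continuousOn_integral_bilinear_of_locally_integrable_of_compact_support
        (ContinuousLinearMap.lsmul ℝ ℝ : ℝ →L[ℝ] ℂ →L[ℝ] ℂ)
        (f := fun (m : M) (g : G) => f (B.elt m g)) (s := interior K) (k := L)
        (g := fun _ : G => (1 : ℝ)) (μ := μ) hLcomp
        (huncurry.mono (Set.prod_mono_left (interior_subset.trans hKU)))
        (fun m g hm hg => key m (interior_subset hm) g hg)
        (MeasureTheory.integrableOn_const hLcomp.measure_lt_top.ne)
      simpa only [ContinuousLinearMap.lsmul_apply, one_smul] using this
    exact hco.continuousAt (isOpen_interior.mem_nhds hm₀K)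
  refine ⟨hcont, hcomp, hzero, ?_⟩
  have hev : (fun m : M => ∫ g : G, f (B.elt m g) ∂μ) =ᶠ[Filter.cocompact M] 0 := by
    filter_upwards [Filter.mem_cocompact.mpr ⟨_, hcomp, subset_rfl⟩] with m hm
    exact hzero m hm
  exact ⟨⟨⟨_, hcont⟩, Filter.Tendsto.congr' hev.symm tendsto_const_nhds⟩, fun m => rfl⟩
end

section
/- Let A be a C₀(M)-algebra over a locally compact Hausdorff space M and F₁, F₂ ⊆ M closed sets, with quotients A_F := A/I_F. Then the sequence 0 → A_{F₁∪F₂} → A_{F₁} ⊕ A_{F₂} → A_{F₁∩F₂} → 0 is exact, where the first map sends [a]_{F₁∪F₂} ↦ ([a]_{F₁}, [a]_{F₂}) and the second sends ([a]_{F₁}, [b]_{F₂}) ↦ [a−b]_{F₁∩F₂}. -/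
set_option linter.unusedSectionVars false
set_option maxHeartbeats 1000000
set_option synthInstance.maxHeartbeats 400000


open scoped ZeroAtInfty MultiplierAlgebra

variable {M : Type*} [TopologicalSpace M] [LocallyCompactSpace M] [T2Space M]
variable {A : Type*} [NonUnitalNormedRing A] [StarRing A] [CStarRing A] [NormedStarGroup A]
  [CompleteSpace A] [NormedSpace ℂ A] [StarModule ℂ A]
  [SMulCommClass ℂ A A] [IsScalarTower ℂ A A]

/-- For a `C₀(M)`-algebra `(A, Φ)` and a closed set `F ⊆ M`, the ideal
`I_F = closure (span {Φ(φ)a : φ ∈ C₀(M∖F), a ∈ A})`, where `C₀(M∖F)` is identified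
with the functions in `C₀(M)` vanishing on `F`. -/
def IdealF (Φ : C₀(M, ℂ) →⋆ₙₐ[ℂ] 𝓜(ℂ, A)) (F : Set M) : Set A :=
  closure (Submodule.span ℂ
    {x : A | ∃ (φ : C₀(M, ℂ)) (a : A), (∀ m ∈ F, φ m = 0) ∧ x = (Φ φ).fst a} : Set A)

noncomputable instance : NonUnitalCStarAlgebra A :=
  { ‹NonUnitalNormedRing A›, ‹StarRing A›, ‹CStarRing A›, ‹NormedSpace ℂ A›,
    ‹IsScalarTower ℂ A A›, ‹SMulCommClass ℂ A A›, ‹StarModule ℂ A›, ‹CompleteSpace A› with }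

namespace Statement12Aux

/-- The span of the generators of `I_F`. -/
def PhiSpan (Φ : C₀(M, ℂ) →⋆ₙₐ[ℂ] 𝓜(ℂ, A)) (F : Set M) : Submodule ℂ A :=
  Submodule.span ℂ
    {x : A | ∃ (φ : C₀(M, ℂ)) (a : A), (∀ m ∈ F, φ m = 0) ∧ x = (Φ φ).fst a}

lemma idealF_eq_coe (Φ : C₀(M, ℂ) →⋆ₙₐ[ℂ] 𝓜(ℂ, A)) (F : Set M) :
    IdealF Φ F = ((PhiSpan Φ F).topologicalClosure : Set A) :=
  (Submodule.topologicalClosure_coe _).symm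

lemma mem_idealF_iff {Φ : C₀(M, ℂ) →⋆ₙₐ[ℂ] 𝓜(ℂ, A)} {F : Set M} {x : A} :
    x ∈ IdealF Φ F ↔ x ∈ (PhiSpan Φ F).topologicalClosure := by
  rw [← SetLike.mem_coe, ← idealF_eq_coe]

lemma isClosed_idealF (Φ : C₀(M, ℂ) →⋆ₙₐ[ℂ] 𝓜(ℂ, A)) (F : Set M) :
    IsClosed (IdealF Φ F) := isClosed_closure

lemma gen_mem (Φ : C₀(M, ℂ) →⋆ₙₐ[ℂ] 𝓜(ℂ, A)) {F : Set M} {φ : C₀(M, ℂ)}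
    (hφ : ∀ m ∈ F, φ m = 0) (a : A) : (Φ φ).fst a ∈ IdealF Φ F :=
  subset_closure (Submodule.subset_span ⟨φ, a, hφ, rfl⟩)

lemma idealF_antitone (Φ : C₀(M, ℂ) →⋆ₙₐ[ℂ] 𝓜(ℂ, A)) {F G : Set M} (h : F ⊆ G) :
    IdealF Φ G ⊆ IdealF Φ F := by
  refine closure_mono (SetLike.coe_subset_coe.mpr (Submodule.span_mono ?_))
  rintro x ⟨φ, a, hφ, rfl⟩
  exact ⟨φ, a, fun m hm => hφ m (h hm), rfl⟩

lemma phi_norm (Φ : C₀(M, ℂ) →⋆ₙₐ[ℂ] 𝓜(ℂ, A)) (f : C₀(M, ℂ)) (x : A) :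
    ‖(Φ f).fst x‖ ≤ ‖f‖ * ‖x‖ := by
  calc ‖(Φ f).fst x‖ ≤ ‖(Φ f).fst‖ * ‖x‖ := (Φ f).fst.le_opNorm x
  _ ≤ ‖f‖ * ‖x‖ := by
      have h1 : ‖(Φ f).fst‖ ≤ ‖f‖ := by
        rw [DoubleCentralizer.norm_fst]
        exact NonUnitalStarAlgHom.norm_apply_le Φ f
      exact mul_le_mul_of_nonneg_right h1 (norm_nonneg x)

lemma c0_norm_le {β : Type*} [SeminormedAddCommGroup β] {f : C₀(M, β)} {c : ℝ} (hc : 0 ≤ c)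
    (h : ∀ m, ‖f m‖ ≤ c) : ‖f‖ ≤ c := by
  rw [← ZeroAtInftyContinuousMap.norm_toBCF_eq_norm]
  exact (BoundedContinuousFunction.norm_le hc).mpr h

/-- Coercion of a real `C₀` function to a complex one. -/
noncomputable def toC (f : C₀(M, ℝ)) : C₀(M, ℂ) where
  toFun := fun m => (f m : ℂ)
  continuous_toFun := Complex.continuous_ofReal.comp f.continuous
  zero_at_infty' := by
    have h : Filter.Tendsto (fun r : ℝ => (r : ℂ)) (nhds 0) (nhds 0) := by
      simpa using Complex.continuous_ofReal.tendsto 0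
    exact h.comp (zero_at_infty f)

@[simp] lemma toC_apply (f : C₀(M, ℝ)) (m : M) : toC f m = (f m : ℂ) := rfl

lemma toC_norm_le_one {ψ : C₀(M, ℝ)} (h0 : ∀ m, 0 ≤ ψ m) (h1 : ∀ m, ψ m ≤ 1) :
    ‖toC ψ‖ ≤ 1 :=
  c0_norm_le zero_le_one fun m => by
    rw [toC_apply, Complex.norm_real, Real.norm_eq_abs, abs_of_nonneg (h0 m)]
    exact h1 m

lemma phi_contr (Φ : C₀(M, ℂ) →⋆ₙₐ[ℂ] 𝓜(ℂ, A)) {ψ : C₀(M, ℝ)} (h0 : ∀ m, 0 ≤ ψ m)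
    (h1 : ∀ m, ψ m ≤ 1) (x : A) : ‖(Φ (toC ψ)).fst x‖ ≤ ‖x‖ := by
  calc ‖(Φ (toC ψ)).fst x‖ ≤ ‖toC ψ‖ * ‖x‖ := phi_norm Φ _ x
  _ ≤ 1 * ‖x‖ := mul_le_mul_of_nonneg_right (toC_norm_le_one h0 h1) (norm_nonneg x)
  _ = ‖x‖ := one_mul _

lemma fst_fst (Φ : C₀(M, ℂ) →⋆ₙₐ[ℂ] 𝓜(ℂ, A)) (f g : C₀(M, ℂ)) (x : A) :
    (Φ f).fst ((Φ g).fst x) = (Φ (f * g)).fst x := by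
  rw [map_mul, DoubleCentralizer.mul_fst, ContinuousLinearMap.mul_apply]

lemma compact_norm_ge {β : Type*} [SeminormedAddCommGroup β] (f : C₀(M, β)) {δ : ℝ}
    (hδ : 0 < δ) : IsCompact {m : M | δ ≤ ‖f m‖} := by
  have h1 : IsClosed {m : M | δ ≤ ‖f m‖} :=
    isClosed_le continuous_const (continuous_norm.comp f.continuous)
  have h2 := (zero_at_infty f) (Metric.ball_mem_nhds 0 hδ)
  rw [Filter.mem_map, Filter.mem_cocompact] at h2
  obtain ⟨t, ht, hsub⟩ := h2
  refine ht.of_isClosed_subset h1 fun m hm => ?_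
  by_contra hmt
  have h3 := hsub hmt
  simp only [Set.mem_preimage, Metric.mem_ball, dist_zero_right] at h3
  exact absurd hm (by simp only [Set.mem_setOf_eq, not_le]; exact h3)

end Statement12Aux

namespace Statement12Aux

/-- Key approximation lemma: every element of `I_F` is approximately fixed by
`Φ(ψ)` for some `ψ ∈ C₀(M)` vanishing on `F` with `0 ≤ ψ ≤ 1`. -/
lemma approx_one (Φ : C₀(M, ℂ) →⋆ₙₐ[ℂ] 𝓜(ℂ, A)) {F : Set M} (hF : IsClosed F) {x : A}
    (hx : x ∈ IdealF Φ F) {ε : ℝ} (hε : 0 < ε) :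
    ∃ ψ : C₀(M, ℝ), (∀ m ∈ F, ψ m = 0) ∧ (∀ m, 0 ≤ ψ m) ∧ (∀ m, ψ m ≤ 1) ∧
      ‖x - (Φ (toC ψ)).fst x‖ < ε := by
  have hspan : ∀ y ∈ Submodule.span ℂ
      {x : A | ∃ (φ : C₀(M, ℂ)) (a : A), (∀ m ∈ F, φ m = 0) ∧ x = (Φ φ).fst a},
      ∀ ε : ℝ, 0 < ε → ∃ ψ : C₀(M, ℝ), (∀ m ∈ F, ψ m = 0) ∧ (∀ m, 0 ≤ ψ m) ∧
        (∀ m, ψ m ≤ 1) ∧ ‖y - (Φ (toC ψ)).fst y‖ < ε := by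
    intro y hy
    induction hy using Submodule.span_induction with
    | mem w hw =>
      obtain ⟨φ, a, hφ, rfl⟩ := hw
      intro ε hε
      set δ := ε / (2 * (‖a‖ + 1)) with hδdef
      have hδ : 0 < δ := by positivity
      set K := {m : M | δ ≤ ‖φ m‖} with hKdef
      have hK : IsCompact K := compact_norm_ge φ hδ
      have hdisj : Disjoint K F := by
        rw [Set.disjoint_left]
        intro m hm hmF
        rw [hKdef, Set.mem_setOf_eq, hφ m hmF] at hm
        simp at hm
        linarith
      obtain ⟨h, hh1, hh0, hhc, hhI⟩ := exists_continuous_one_zero_of_isCompact hK hF hdisj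
      refine ⟨⟨h, hhc.is_zero_at_infty⟩, fun m hm => hh0 hm, fun m => (hhI m).1,
        fun m => (hhI m).2, ?_⟩
      set ψ : C₀(M, ℝ) := ⟨h, hhc.is_zero_at_infty⟩ with hψdef
      have key : (Φ φ).fst a - (Φ (toC ψ)).fst ((Φ φ).fst a) = (Φ (φ - toC ψ * φ)).fst a := by
        rw [map_sub, DoubleCentralizer.sub_fst, ContinuousLinearMap.sub_apply, ← fst_fst]
      have hnb : ‖φ - toC ψ * φ‖ ≤ δ := by
        refine c0_norm_le hδ.le fun m => ?_
        have hval : (φ - toC ψ * φ) m = (1 - (ψ m : ℂ)) * φ m := by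
          simp only [ZeroAtInftyContinuousMap.sub_apply, ZeroAtInftyContinuousMap.mul_apply,
            toC_apply]
          ring
        rw [hval, norm_mul]
        by_cases hm : m ∈ K
        · have h1 : h m = 1 := hh1 hm
          have : ψ m = 1 := h1
          rw [this]
          simp [hδ.le]
        · rw [hKdef, Set.mem_setOf_eq, not_le] at hm
          have hIm : 0 ≤ ψ m ∧ ψ m ≤ 1 := ⟨(hhI m).1, (hhI m).2⟩
          have hb : ‖(1 : ℂ) - (ψ m : ℂ)‖ ≤ 1 := by
            rw [show (1 : ℂ) - (ψ m : ℂ) = ((1 - ψ m : ℝ) : ℂ) by push_cast; ring,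
              Complex.norm_real, Real.norm_eq_abs, abs_of_nonneg (by linarith [hIm.2])]
            linarith [hIm.1]
          calc ‖(1 : ℂ) - (ψ m : ℂ)‖ * ‖φ m‖ ≤ 1 * ‖φ m‖ :=
                mul_le_mul_of_nonneg_right hb (norm_nonneg _)
          _ = ‖φ m‖ := one_mul _
          _ ≤ δ := hm.le
      rw [key]
      calc ‖(Φ (φ - toC ψ * φ)).fst a‖ ≤ ‖φ - toC ψ * φ‖ * ‖a‖ := phi_norm Φ _ a
      _ ≤ δ * ‖a‖ := mul_le_mul_of_nonneg_right hnb (norm_nonneg a)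
      _ < ε := by
          rw [hδdef, div_mul_eq_mul_div, div_lt_iff₀ (by positivity)]
          nlinarith [norm_nonneg a, hε]
    | zero =>
      intro ε hε
      exact ⟨0, by simp, by simp, by simp, by simpa using hε⟩
    | add w₁ w₂ hw₁ hw₂ ih₁ ih₂ =>
      intro ε hε
      obtain ⟨ψ₁, hv₁, h10, h11, hlt₁⟩ := ih₁ (ε / 4) (by positivity)
      obtain ⟨ψ₂, hv₂, h20, h21, hlt₂⟩ := ih₂ (ε / 4) (by positivity)
      refine ⟨ψ₁ + ψ₂ - ψ₁ * ψ₂, ?_, ?_, ?_, ?_⟩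
      · intro m hm
        simp [hv₁ m hm, hv₂ m hm]
      · intro m
        simp only [ZeroAtInftyContinuousMap.sub_apply, ZeroAtInftyContinuousMap.add_apply,
          ZeroAtInftyContinuousMap.mul_apply]
        nlinarith [h10 m, h11 m, h20 m, h21 m]
      · intro m
        simp only [ZeroAtInftyContinuousMap.sub_apply, ZeroAtInftyContinuousMap.add_apply,
          ZeroAtInftyContinuousMap.mul_apply]
        nlinarith [h10 m, h11 m, h20 m, h21 m]
      · have htoC : toC (ψ₁ + ψ₂ - ψ₁ * ψ₂) = toC ψ₁ + toC ψ₂ - toC ψ₁ * toC ψ₂ := by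
          ext m
          simp only [toC_apply, ZeroAtInftyContinuousMap.sub_apply,
            ZeroAtInftyContinuousMap.add_apply, ZeroAtInftyContinuousMap.mul_apply]
          push_cast
          ring
        have hw : ∀ w : A, (Φ (toC (ψ₁ + ψ₂ - ψ₁ * ψ₂))).fst w
            = (Φ (toC ψ₁)).fst w + (Φ (toC ψ₂)).fst w
              - (Φ (toC ψ₁)).fst ((Φ (toC ψ₂)).fst w) := by
          intro w
          rw [htoC, map_sub, map_add, DoubleCentralizer.sub_fst, DoubleCentralizer.add_fst,
            ContinuousLinearMap.sub_apply, ContinuousLinearMap.add_apply, fst_fst]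
        have hcomm : ∀ w : A, (Φ (toC ψ₁)).fst ((Φ (toC ψ₂)).fst w)
            = (Φ (toC ψ₂)).fst ((Φ (toC ψ₁)).fst w) := by
          intro w
          rw [fst_fst, fst_fst, mul_comm]
        have hid : (w₁ + w₂) - (Φ (toC (ψ₁ + ψ₂ - ψ₁ * ψ₂))).fst (w₁ + w₂)
            = ((w₁ - (Φ (toC ψ₁)).fst w₁)
                - (Φ (toC ψ₂)).fst (w₁ - (Φ (toC ψ₁)).fst w₁))
              + ((w₂ - (Φ (toC ψ₂)).fst w₂)
                - (Φ (toC ψ₁)).fst (w₂ - (Φ (toC ψ₂)).fst w₂)) := by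
          rw [hw]
          simp only [map_add, map_sub]
          rw [hcomm w₁]
          abel
        rw [hid]
        have e₁ : ‖(Φ (toC ψ₂)).fst (w₁ - (Φ (toC ψ₁)).fst w₁)‖
            ≤ ‖w₁ - (Φ (toC ψ₁)).fst w₁‖ := phi_contr Φ h20 h21 _
        have e₂ : ‖(Φ (toC ψ₁)).fst (w₂ - (Φ (toC ψ₂)).fst w₂)‖
            ≤ ‖w₂ - (Φ (toC ψ₂)).fst w₂‖ := phi_contr Φ h10 h11 _
        calc ‖_ + _‖ ≤ ‖(w₁ - (Φ (toC ψ₁)).fst w₁)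
                - (Φ (toC ψ₂)).fst (w₁ - (Φ (toC ψ₁)).fst w₁)‖
              + ‖(w₂ - (Φ (toC ψ₂)).fst w₂)
                - (Φ (toC ψ₁)).fst (w₂ - (Φ (toC ψ₂)).fst w₂)‖ := norm_add_le _ _
        _ < ε := by
            have t₁ := norm_sub_le (w₁ - (Φ (toC ψ₁)).fst w₁)
              ((Φ (toC ψ₂)).fst (w₁ - (Φ (toC ψ₁)).fst w₁))
            have t₂ := norm_sub_le (w₂ - (Φ (toC ψ₂)).fst w₂)
              ((Φ (toC ψ₁)).fst (w₂ - (Φ (toC ψ₂)).fst w₂))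
            linarith
    | smul c w hw ih =>
      intro ε hε
      obtain ⟨ψ, hv, h0, h1, hlt⟩ := ih (ε / (‖c‖ + 1)) (by positivity)
      refine ⟨ψ, hv, h0, h1, ?_⟩
      have : c • w - (Φ (toC ψ)).fst (c • w) = c • (w - (Φ (toC ψ)).fst w) := by
        rw [map_smul, smul_sub]
      rw [this, norm_smul]
      have hc : 0 ≤ ‖c‖ := norm_nonneg c
      have h2 : (‖c‖ + 1) * ‖w - (Φ (toC ψ)).fst w‖ < ε := by
        rw [← lt_div_iff₀' (by positivity)]
        exact hlt
      nlinarith [norm_nonneg (w - (Φ (toC ψ)).fst w)]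
  rw [IdealF, Metric.mem_closure_iff] at hx
  obtain ⟨s, hs, hdist⟩ := hx (ε / 3) (by positivity)
  obtain ⟨ψ, hv, h0, h1, hlt⟩ := hspan s hs (ε / 3) (by positivity)
  refine ⟨ψ, hv, h0, h1, ?_⟩
  have hxs : ‖x - s‖ < ε / 3 := by rw [← dist_eq_norm]; exact hdist
  have hid : x - (Φ (toC ψ)).fst x
      = (x - s) + (s - (Φ (toC ψ)).fst s) + (Φ (toC ψ)).fst (s - x) := by
    simp only [map_sub]
    abel
  rw [hid]
  have h3 : ‖(Φ (toC ψ)).fst (s - x)‖ ≤ ‖s - x‖ := phi_contr Φ h0 h1 _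
  have h4 : ‖s - x‖ = ‖x - s‖ := norm_sub_rev s x
  calc ‖(x - s) + (s - (Φ (toC ψ)).fst s) + (Φ (toC ψ)).fst (s - x)‖
      ≤ ‖x - s‖ + ‖s - (Φ (toC ψ)).fst s‖ + ‖(Φ (toC ψ)).fst (s - x)‖ := norm_add₃_le
  _ < ε := by rw [h4] at h3; linarith

end Statement12Aux

namespace Statement12Aux

/-- Two-set approximation: elements of `I_{F₁ ∩ F₂}` are approximately `Φ(ψ₁)x + Φ(ψ₂)x`
with `ψᵢ` vanishing on `Fᵢ`. -/
lemma approx_two (Φ : C₀(M, ℂ) →⋆ₙₐ[ℂ] 𝓜(ℂ, A)) {F₁ F₂ : Set M} (hF₁ : IsClosed F₁)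
    (hF₂ : IsClosed F₂) {x : A} (hx : x ∈ IdealF Φ (F₁ ∩ F₂)) {ε : ℝ} (hε : 0 < ε) :
    ∃ ψ₁ ψ₂ : C₀(M, ℝ), (∀ m ∈ F₁, ψ₁ m = 0) ∧ (∀ m ∈ F₂, ψ₂ m = 0) ∧
      (∀ m, 0 ≤ ψ₁ m) ∧ (∀ m, ψ₁ m ≤ 1) ∧ (∀ m, 0 ≤ ψ₂ m) ∧ (∀ m, ψ₂ m ≤ 1) ∧
      ‖x - (Φ (toC ψ₁)).fst x - (Φ (toC ψ₂)).fst x‖ < ε := by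
  obtain ⟨ψ, hψF, hψ0, hψ1, hψx⟩ := approx_one Φ (hF₁.inter hF₂) hx (half_pos hε)
  set δ := ε / (2 * (‖x‖ + 1)) with hδdef
  have hδ : 0 < δ := by positivity
  set K := {m : M | δ ≤ ‖ψ m‖} with hKdef
  have hK : IsCompact K := compact_norm_ge ψ hδ
  have hKsub : K ⊆ F₁ᶜ ∪ F₂ᶜ := by
    intro m hm
    by_contra hcon
    simp only [Set.mem_union, Set.mem_compl_iff, not_or, not_not] at hcon
    have h0 : ψ m = 0 := hψF m ⟨hcon.1, hcon.2⟩
    rw [hKdef, Set.mem_setOf_eq, h0] at hm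
    simp at hm
    linarith
  obtain ⟨K₁, K₂, hK₁, hK₂, hK₁s, hK₂s, hKeq⟩ :=
    hK.binary_compact_cover hF₁.isOpen_compl hF₂.isOpen_compl hKsub
  obtain ⟨h₁, h₁1, h₁0, h₁c, h₁I⟩ := exists_continuous_one_zero_of_isCompact hK₁ hF₁
    (Set.disjoint_left.mpr fun m hm => hK₁s hm)
  obtain ⟨h₂, h₂1, h₂0, h₂c, h₂I⟩ := exists_continuous_one_zero_of_isCompact hK₂ hF₂
    (Set.disjoint_left.mpr fun m hm => hK₂s hm)
  set g₁ : C₀(M, ℝ) := ⟨h₁, h₁c.is_zero_at_infty⟩ with hg₁def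
  set g₂ : C₀(M, ℝ) := ⟨h₂, h₂c.is_zero_at_infty⟩ with hg₂def
  set ψ₁ : C₀(M, ℝ) := ψ * g₁ with hψ₁def
  set ψ₂ : C₀(M, ℝ) := ψ * g₂ - ψ * g₂ * g₁ with hψ₂def
  have hval₁ : ∀ m, ψ₁ m = ψ m * h₁ m := fun m => rfl
  have hval₂ : ∀ m, ψ₂ m = ψ m * h₂ m * (1 - h₁ m) := by
    intro m
    simp only [hψ₂def, ZeroAtInftyContinuousMap.sub_apply, ZeroAtInftyContinuousMap.mul_apply]
    show ψ m * h₂ m - ψ m * h₂ m * h₁ m = _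
    ring
  have hb₁ : ∀ m, 0 ≤ h₁ m ∧ h₁ m ≤ 1 := fun m => ⟨(h₁I m).1, (h₁I m).2⟩
  have hb₂ : ∀ m, 0 ≤ h₂ m ∧ h₂ m ≤ 1 := fun m => ⟨(h₂I m).1, (h₂I m).2⟩
  refine ⟨ψ₁, ψ₂, ?_, ?_, ?_, ?_, ?_, ?_, ?_⟩
  · intro m hm
    have hz : h₁ m = 0 := h₁0 hm
    rw [hval₁ m, hz, mul_zero]
  · intro m hm
    have hz : h₂ m = 0 := h₂0 hm
    rw [hval₂ m, hz]
    ring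
  · intro m
    rw [hval₁ m]
    exact mul_nonneg (hψ0 m) (hb₁ m).1
  · intro m
    rw [hval₁ m]
    nlinarith [hψ0 m, hψ1 m, (hb₁ m).1, (hb₁ m).2]
  · intro m
    rw [hval₂ m]
    exact mul_nonneg (mul_nonneg (hψ0 m) (hb₂ m).1) (by linarith [(hb₁ m).2])
  · intro m
    rw [hval₂ m]
    have hab : 0 ≤ ψ m * h₂ m := mul_nonneg (hψ0 m) (hb₂ m).1
    have hab1 : ψ m * h₂ m ≤ 1 := by nlinarith [hψ0 m, hψ1 m, (hb₂ m).1, (hb₂ m).2]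
    nlinarith [(hb₁ m).1, (hb₁ m).2]
  · -- the norm estimate
    have hdiffval : ∀ m, (toC ψ - toC ψ₁ - toC ψ₂) m
        = ((ψ m * (1 - h₁ m) * (1 - h₂ m) : ℝ) : ℂ) := by
      intro m
      simp only [ZeroAtInftyContinuousMap.sub_apply, toC_apply]
      rw [hval₁ m, hval₂ m]
      push_cast
      ring
    have hdiff : ‖toC ψ - toC ψ₁ - toC ψ₂‖ ≤ δ := by
      refine c0_norm_le hδ.le fun m => ?_
      rw [hdiffval m, Complex.norm_real, Real.norm_eq_abs]
      have hfac : 0 ≤ ψ m * (1 - h₁ m) * (1 - h₂ m) :=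
        mul_nonneg (mul_nonneg (hψ0 m) (by linarith [(hb₁ m).2])) (by linarith [(hb₂ m).2])
      rw [abs_of_nonneg hfac]
      by_cases hm : m ∈ K
      · rw [hKeq] at hm
        rcases hm with hm | hm
        · have ho : h₁ m = 1 := h₁1 hm
          rw [ho]
          simpa using hδ.le
        · have ho : h₂ m = 1 := h₂1 hm
          rw [ho]
          simpa using hδ.le
      · rw [hKdef, Set.mem_setOf_eq, not_le, Real.norm_eq_abs] at hm
        have habs : ψ m ≤ |ψ m| := le_abs_self _
        have h1n : 0 ≤ ψ m * (1 - h₁ m) := mul_nonneg (hψ0 m) (by linarith [(hb₁ m).2])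
        have h1 : ψ m * (1 - h₁ m) ≤ ψ m := by nlinarith [hψ0 m, (hb₁ m).1, (hb₁ m).2]
        have h2 : ψ m * (1 - h₁ m) * (1 - h₂ m) ≤ ψ m * (1 - h₁ m) := by
          nlinarith [(hb₂ m).1, (hb₂ m).2]
        linarith
    have hid : x - (Φ (toC ψ₁)).fst x - (Φ (toC ψ₂)).fst x
        = (x - (Φ (toC ψ)).fst x) + (Φ (toC ψ - toC ψ₁ - toC ψ₂)).fst x := by
      rw [map_sub, map_sub, DoubleCentralizer.sub_fst, DoubleCentralizer.sub_fst,
        ContinuousLinearMap.sub_apply, ContinuousLinearMap.sub_apply]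
      abel
    rw [hid]
    have h5 : ‖(Φ (toC ψ - toC ψ₁ - toC ψ₂)).fst x‖ ≤ δ * ‖x‖ := by
      calc ‖(Φ (toC ψ - toC ψ₁ - toC ψ₂)).fst x‖
          ≤ ‖toC ψ - toC ψ₁ - toC ψ₂‖ * ‖x‖ := phi_norm Φ _ x
      _ ≤ δ * ‖x‖ := mul_le_mul_of_nonneg_right hdiff (norm_nonneg x)
    have h6 : δ * ‖x‖ < ε / 2 := by
      rw [hδdef, div_mul_eq_mul_div, div_lt_iff₀ (by positivity)]
      nlinarith [norm_nonneg x, hε]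
    calc ‖(x - (Φ (toC ψ)).fst x) + (Φ (toC ψ - toC ψ₁ - toC ψ₂)).fst x‖
        ≤ ‖x - (Φ (toC ψ)).fst x‖ + ‖(Φ (toC ψ - toC ψ₁ - toC ψ₂)).fst x‖ := norm_add_le _ _
    _ < ε := by linarith

end Statement12Aux

open Statement12Aux in
/-- for a `C₀(M)`-algebra `A` and closed sets `F₁, F₂ ⊆ M`, the sequence
`0 → A_{F₁∪F₂} → A_{F₁} ⊕ A_{F₂} → A_{F₁∩F₂} → 0` is exact, where `A_F = A/I_F`, the
first map is `[a] ↦ ([a],[a])` and the second is `([a],[b]) ↦ [a−b]`. Stated at the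
level of the ideals `I_F`, exactness amounts to:
(1) injectivity of the first map: `I_{F₁∪F₂} = I_{F₁} ∩ I_{F₂}`;
(2) exactness in the middle: `c − d ∈ I_{F₁∩F₂}` iff there is a single `b` with
`c − b ∈ I_{F₁}` and `d − b ∈ I_{F₂}`;
(3) surjectivity of the second map: every class in `A_{F₁∩F₂}` is of the form `[c−d]`. -/
theorem statement12 (Φ : C₀(M, ℂ) →⋆ₙₐ[ℂ] 𝓜(ℂ, A))
    (hcentral : ∀ (φ : C₀(M, ℂ)) (T : 𝓜(ℂ, A)), Φ φ * T = T * Φ φ)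
    (hnondeg : Dense (Submodule.span ℂ
      {x : A | ∃ (φ : C₀(M, ℂ)) (a : A), x = (Φ φ).fst a} : Set A))
    (F₁ F₂ : Set M) (hF₁ : IsClosed F₁) (hF₂ : IsClosed F₂) :
    IdealF Φ (F₁ ∪ F₂) = IdealF Φ F₁ ∩ IdealF Φ F₂ ∧
    (∀ c d : A, c - d ∈ IdealF Φ (F₁ ∩ F₂) ↔
      ∃ b : A, c - b ∈ IdealF Φ F₁ ∧ d - b ∈ IdealF Φ F₂) ∧
    (∀ a : A, ∃ c d : A, a - (c - d) ∈ IdealF Φ (F₁ ∩ F₂)) := by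
  refine ⟨?_, ?_, ?_⟩
  · -- (1) I_{F₁∪F₂} = I_{F₁} ∩ I_{F₂}
    apply Set.Subset.antisymm
    · exact Set.subset_inter (idealF_antitone Φ Set.subset_union_left)
        (idealF_antitone Φ Set.subset_union_right)
    · rintro x ⟨hx₁, hx₂⟩
      rw [IdealF, Metric.mem_closure_iff]
      intro ε hε
      obtain ⟨ψ₁, hv₁, h10, h11, hlt₁⟩ := approx_one Φ hF₁ hx₁ (half_pos hε)
      obtain ⟨ψ₂, hv₂, h20, h21, hlt₂⟩ := approx_one Φ hF₂ hx₂ (half_pos hε)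
      refine ⟨(Φ (toC ψ₁ * toC ψ₂)).fst x, ?_, ?_⟩
      · refine Submodule.subset_span ⟨toC ψ₁ * toC ψ₂, x, ?_, rfl⟩
        rintro m (hm | hm)
        · simp [hv₁ m hm]
        · simp [hv₂ m hm]
      · rw [dist_eq_norm]
        have hid : x - (Φ (toC ψ₁ * toC ψ₂)).fst x
            = (x - (Φ (toC ψ₁)).fst x) + (Φ (toC ψ₁)).fst (x - (Φ (toC ψ₂)).fst x) := by
          rw [← fst_fst]
          simp only [map_sub]
          abel
        rw [hid]
        have h3 : ‖(Φ (toC ψ₁)).fst (x - (Φ (toC ψ₂)).fst x)‖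
            ≤ ‖x - (Φ (toC ψ₂)).fst x‖ := phi_contr Φ h10 h11 _
        calc ‖(x - (Φ (toC ψ₁)).fst x) + (Φ (toC ψ₁)).fst (x - (Φ (toC ψ₂)).fst x)‖
            ≤ ‖x - (Φ (toC ψ₁)).fst x‖
              + ‖(Φ (toC ψ₁)).fst (x - (Φ (toC ψ₂)).fst x)‖ := norm_add_le _ _
        _ < ε := by linarith
  · -- (2) exactness in the middle
    intro c d
    constructor
    · -- hard direction
      intro hcd
      have step' : ∀ (x : A) (ε : ℝ), 0 < ε → ∃ y z : A,
          x ∈ IdealF Φ (F₁ ∩ F₂) → y ∈ IdealF Φ F₁ ∧ z ∈ IdealF Φ F₂ ∧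
            x - y - z ∈ IdealF Φ (F₁ ∩ F₂) ∧ ‖x - y - z‖ < ε ∧ ‖y‖ ≤ ‖x‖ ∧ ‖z‖ ≤ ‖x‖ := by
        intro x ε hε
        by_cases hx : x ∈ IdealF Φ (F₁ ∩ F₂)
        · obtain ⟨ψ₁, ψ₂, hv₁, hv₂, h10, h11, h20, h21, hlt⟩ :=
            approx_two Φ hF₁ hF₂ hx hε
          refine ⟨(Φ (toC ψ₁)).fst x, (Φ (toC ψ₂)).fst x, fun _ => ?_⟩
          refine ⟨gen_mem Φ (fun m hm => by simp [hv₁ m hm]) x,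
            gen_mem Φ (fun m hm => by simp [hv₂ m hm]) x, ?_, hlt,
            phi_contr Φ h10 h11 x, phi_contr Φ h20 h21 x⟩
          have hxm : x ∈ (PhiSpan Φ (F₁ ∩ F₂)).topologicalClosure := mem_idealF_iff.mp hx
          have hy : (Φ (toC ψ₁)).fst x ∈ (PhiSpan Φ (F₁ ∩ F₂)).topologicalClosure :=
            mem_idealF_iff.mp (gen_mem Φ (fun m hm => by simp [hv₁ m hm.1]) x)
          have hz : (Φ (toC ψ₂)).fst x ∈ (PhiSpan Φ (F₁ ∩ F₂)).topologicalClosure :=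
            mem_idealF_iff.mp (gen_mem Φ (fun m hm => by simp [hv₂ m hm.2]) x)
          exact mem_idealF_iff.mpr (sub_mem (sub_mem hxm hy) hz)
        · exact ⟨0, 0, fun h => absurd h hx⟩
      choose Y Z hYZ using step'
      set e : ℕ → ℝ := fun n => (2⁻¹ : ℝ) ^ (n + 1) with he_def
      have he : ∀ n, 0 < e n := fun n => by positivity
      set u : ℕ → A := fun n =>
        Nat.rec (c - d) (fun k xk => xk - Y xk (e k) (he k) - Z xk (e k) (he k)) n with hu_def
      set y : ℕ → A := fun n => Y (u n) (e n) (he n) with hy_def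
      set z : ℕ → A := fun n => Z (u n) (e n) (he n) with hz_def
      have husucc : ∀ n, u (n + 1) = u n - y n - z n := fun n => rfl
      have humem : ∀ n, u n ∈ IdealF Φ (F₁ ∩ F₂) := by
        intro n
        induction n with
        | zero => exact hcd
        | succ k ih =>
          rw [husucc k]
          exact (hYZ (u k) (e k) (he k) ih).2.2.1
      have hprop : ∀ n, y n ∈ IdealF Φ F₁ ∧ z n ∈ IdealF Φ F₂ ∧
          u n - y n - z n ∈ IdealF Φ (F₁ ∩ F₂) ∧ ‖u n - y n - z n‖ < e n ∧
          ‖y n‖ ≤ ‖u n‖ ∧ ‖z n‖ ≤ ‖u n‖ := fun n => hYZ (u n) (e n) (he n) (humem n)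
      have husuccnorm : ∀ n, ‖u (n + 1)‖ < e n := by
        intro n
        rw [husucc n]
        exact (hprop n).2.2.2.1
      set C := ‖c - d‖ + 1 with hC_def
      have hC1 : 1 ≤ C := by
        have := norm_nonneg (c - d)
        linarith
      have hub : ∀ n, ‖u n‖ ≤ C * (2⁻¹ : ℝ) ^ n := by
        intro n
        cases n with
        | zero =>
          have h0 : u 0 = c - d := rfl
          rw [h0, pow_zero, mul_one, hC_def]
          linarith [norm_nonneg (c - d)]
        | succ k =>
          have h1 := (husuccnorm k).le
          have h2 : (2⁻¹ : ℝ) ^ (k + 1) ≤ C * (2⁻¹ : ℝ) ^ (k + 1) :=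
            le_mul_of_one_le_left (by positivity) hC1
          exact h1.trans h2
      have hyb : ∀ n, ‖y n‖ ≤ C * (2⁻¹ : ℝ) ^ n := fun n => (hprop n).2.2.2.2.1.trans (hub n)
      have hzb : ∀ n, ‖z n‖ ≤ C * (2⁻¹ : ℝ) ^ n := fun n => (hprop n).2.2.2.2.2.trans (hub n)
      have hgeom : Summable fun n : ℕ => C * (2⁻¹ : ℝ) ^ n :=
        (summable_geometric_of_lt_one (by norm_num) (by norm_num)).mul_left C
      have hsy : Summable y := Summable.of_norm_bounded hgeom hyb
      have hsz : Summable z := Summable.of_norm_bounded hgeom hzb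
      set sy := ∑' n, y n with hsy_def
      set sz := ∑' n, z n with hsz_def
      have hclosed₁ : IsClosed ((PhiSpan Φ F₁).topologicalClosure : Set A) :=
        (PhiSpan Φ F₁).isClosed_topologicalClosure
      have hclosed₂ : IsClosed ((PhiSpan Φ F₂).topologicalClosure : Set A) :=
        (PhiSpan Φ F₂).isClosed_topologicalClosure
      have hsy_mem : sy ∈ (PhiSpan Φ F₁).topologicalClosure := by
        refine hclosed₁.mem_of_tendsto hsy.hasSum.tendsto_sum_nat
          (Filter.Eventually.of_forall fun n => ?_)
        exact Submodule.sum_mem _ fun k _ => mem_idealF_iff.mp (hprop k).1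
      have hsz_mem : sz ∈ (PhiSpan Φ F₂).topologicalClosure := by
        refine hclosed₂.mem_of_tendsto hsz.hasSum.tendsto_sum_nat
          (Filter.Eventually.of_forall fun n => ?_)
        exact Submodule.sum_mem _ fun k _ => mem_idealF_iff.mp (hprop k).2.1
      have hzero : Filter.Tendsto u Filter.atTop (nhds 0) := by
        refine squeeze_zero_norm hub ?_
        simpa using (tendsto_pow_atTop_nhds_zero_of_lt_one (by norm_num : (0:ℝ) ≤ 2⁻¹)
          (by norm_num)).const_mul C
      have hpartial : ∀ n, ∑ k ∈ Finset.range n, (y k + z k) = (c - d) - u n := by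
        intro n
        induction n with
        | zero => simp [show u 0 = c - d from rfl]
        | succ k ih =>
          rw [Finset.sum_range_succ, ih, husucc k]
          abel
      have h1 : Filter.Tendsto (fun n => ∑ k ∈ Finset.range n, (y k + z k))
          Filter.atTop (nhds ((c - d) - 0)) := by
        refine Filter.Tendsto.congr (fun n => (hpartial n).symm) ?_
        exact tendsto_const_nhds.sub hzero
      have h2 : Filter.Tendsto (fun n => ∑ k ∈ Finset.range n, (y k + z k))
          Filter.atTop (nhds (sy + sz)) := (hsy.hasSum.add hsz.hasSum).tendsto_sum_nat
      have heq : sy + sz = c - d := by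
        have := tendsto_nhds_unique h2 h1
        simpa using this
      refine ⟨c - sy, ?_, ?_⟩
      · have : c - (c - sy) = sy := by abel
        rw [this]
        exact mem_idealF_iff.mpr hsy_mem
      · have : d - (c - sy) = -sz := by
          have h3 : sz = (c - d) - sy := by rw [← heq]; abel
          rw [h3]; abel
        rw [this]
        exact mem_idealF_iff.mpr (neg_mem hsz_mem)
    · -- easy direction
      rintro ⟨b, hb₁, hb₂⟩
      have h1 : c - b ∈ (PhiSpan Φ (F₁ ∩ F₂)).topologicalClosure :=
        mem_idealF_iff.mp (idealF_antitone Φ Set.inter_subset_left hb₁)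
      have h2 : d - b ∈ (PhiSpan Φ (F₁ ∩ F₂)).topologicalClosure :=
        mem_idealF_iff.mp (idealF_antitone Φ Set.inter_subset_right hb₂)
      have : c - d = (c - b) - (d - b) := by abel
      rw [this]
      exact mem_idealF_iff.mpr (sub_mem h1 h2)
  · -- (3) surjectivity
    intro a
    refine ⟨a, 0, ?_⟩
    have : a - (a - 0) = 0 := by abel
    rw [this]
    exact mem_idealF_iff.mpr (zero_mem _)
end
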